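/- For every fixed λ > 0, the map γ ↦ γ^{1/3}·H_γ(λ) is non-increasing on (0,∞); that is, for all 0 < γ₁ < γ₂ one has γ₁^{1/3}·H_{γ₁}(λ) ≥ γ₂^{1/3}·H_{γ₂}(λ). -/

import Mathlib

open scoped BigOperators Classical
open Real Filter

namespace CriticalPrewetting

/-- `n`-fold convolution of `p`, with `conv p 0` the point mass at `0`. -/
noncomputable def conv (p : ℤ → ℝ) : ℕ → ℤ → ℝ
  | 0 => fun k => if k = 0 then 1 else 0
  | n + 1 => fun k => ∑' j : ℤ, conv p n j * p (k - j)

/-- Standing assumptions on the step distribution `p`: a probability mass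
function on `ℤ` with zero mean, finite variance, strictly aperiodic. -/
structure StepPMF (p : ℤ → ℝ) : Prop where
  nonneg : ∀ k, 0 ≤ p k
  summable : Summable p
  total : (∑' k : ℤ, p k) = 1
  mean_summable : Summable fun k : ℤ => (k : ℝ) * p k
  mean_zero : (∑' k : ℤ, (k : ℝ) * p k) = 0
  var_summable : Summable fun k : ℤ => (k : ℝ) ^ 2 * p k
  aperiodic : ∃ A : ℕ, 0 < A ∧ ∀ n : ℕ, A ≤ n →
      0 < conv p n (-1) ∧ 0 < conv p n 0 ∧ 0 < conv p n 1

/-- Standing assumptions on the potential `V` (viewed on `[0,∞)`): convex,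
continuous, strictly increasing, `V 0 = 0`, `V x → ∞`. -/
structure Potential (V : ℝ → ℝ) : Prop where
  nonneg : ∀ x, 0 ≤ x → 0 ≤ V x
  zero : V 0 = 0
  convexOn : ConvexOn ℝ (Set.Ici (0 : ℝ)) V
  continuousOn : ContinuousOn V (Set.Ici (0 : ℝ))
  strictMonoOn : StrictMonoOn V (Set.Ici (0 : ℝ))
  tendsto_atTop : Tendsto V atTop atTop

/-- Bounded growth of `V` at infinity, controlled by `f`:
`limsup_{x→∞} V(αx)/V(x) ≤ f α < ∞` for every `α > 0`. -/
def BoundedGrowth (V : ℝ → ℝ) (f : ℝ → ℝ) : Prop :=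
  ∀ α : ℝ, 0 < α → 0 < f α ∧ limsup (fun x => V (α * x) / V x) atTop ≤ f α

/-- `X` is an admissible nonnegative trajectory on `{0, …, N}` from `a` to `b`,
extended by `0` beyond `N`. -/
def IsTraj (N : ℕ) (a b : ℤ) (X : ℕ → ℤ) : Prop :=
  X 0 = a ∧ X N = b ∧ (∀ i, 0 ≤ X i) ∧ ∀ i, N < i → X i = 0

/-- The weight `exp(-λ Σ_{i=1}^{N-1} V(X_i)) Π_{i=0}^{N-1} p(X_{i+1}-X_i)`
of a trajectory. -/
noncomputable def weight (p : ℤ → ℝ) (V : ℝ → ℝ) (lam : ℝ) (N : ℕ) (a b : ℤ)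
    (X : ℕ → ℤ) : ℝ :=
  if IsTraj N a b X then
    Real.exp (-lam * ∑ i ∈ Finset.Ioo 0 N, V ((X i : ℝ))) *
      ∏ i ∈ Finset.range N, p (X (i + 1) - X i)
  else 0

/-- The partition function `Z_{N,+}^{λ,a,b}`. -/
noncomputable def Zpart (p : ℤ → ℝ) (V : ℝ → ℝ) (lam : ℝ) (N : ℕ) (a b : ℤ) : ℝ :=
  ∑' X : ℕ → ℤ, weight p V lam N a b X

/-- The probability `P_{N,+}^{λ,a,b}(A)` of a set `A` of trajectories. -/
noncomputable def prob (p : ℤ → ℝ) (V : ℝ → ℝ) (lam : ℝ) (N : ℕ) (a b : ℤ)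
    (A : Set (ℕ → ℤ)) : ℝ :=
  (∑' X : ℕ → ℤ, Set.indicator A (weight p V lam N a b) X) / Zpart p V lam N a b

/-- Conditional probability `P_{N,+}^{λ,a,b}(A ∣ B)`. -/
noncomputable def condProb (p : ℤ → ℝ) (V : ℝ → ℝ) (lam : ℝ) (N : ℕ) (a b : ℤ)
    (A B : Set (ℕ → ℤ)) : ℝ :=
  prob p V lam N a b (A ∩ B) / prob p V lam N a b B

/-- Expectation `E_{N,+}^{λ,a,b}[g]`. -/
noncomputable def expect (p : ℤ → ℝ) (V : ℝ → ℝ) (lam : ℝ) (N : ℕ) (a b : ℤ)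
    (g : (ℕ → ℤ) → ℝ) : ℝ :=
  (∑' X : ℕ → ℤ, g X * weight p V lam N a b X) / Zpart p V lam N a b

/-- Admissible nonnegative trajectory on the integer interval `{l, …, r}`. -/
def IsTrajI (l r : ℕ) (a b : ℤ) (X : ℕ → ℤ) : Prop :=
  X l = a ∧ X r = b ∧ (∀ i, 0 ≤ X i) ∧ (∀ i, i < l → X i = 0) ∧ ∀ i, r < i → X i = 0

/-- Weight of a trajectory on the interval `(l, r)`. -/
noncomputable def weightI (p : ℤ → ℝ) (V : ℝ → ℝ) (lam : ℝ) (l r : ℕ) (a b : ℤ)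
    (X : ℕ → ℤ) : ℝ :=
  if IsTrajI l r a b X then
    Real.exp (-lam * ∑ i ∈ Finset.Ioo l r, V ((X i : ℝ))) *
      ∏ i ∈ Finset.Ico l r, p (X (i + 1) - X i)
  else 0

/-- The probability `P_{(l,r),+}^{λ,a,b}(A)`. -/
noncomputable def probI (p : ℤ → ℝ) (V : ℝ → ℝ) (lam : ℝ) (l r : ℕ) (a b : ℤ)
    (A : Set (ℕ → ℤ)) : ℝ :=
  (∑' X : ℕ → ℤ, Set.indicator A (weightI p V lam l r a b) X) /
    ∑' X : ℕ → ℤ, weightI p V lam l r a b X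

/-- Conditional probability `P_{(l,r),+}^{λ,a,b}(A ∣ B)`. -/
noncomputable def condProbI (p : ℤ → ℝ) (V : ℝ → ℝ) (lam : ℝ) (l r : ℕ) (a b : ℤ)
    (A B : Set (ℕ → ℤ)) : ℝ :=
  probI p V lam l r a b (A ∩ B) / probI p V lam l r a b B

/-- Joint (product) probability for two independent trajectories. -/
noncomputable def prob2 (p : ℤ → ℝ) (V : ℝ → ℝ) (lam : ℝ) (N : ℕ)
    (a₁ b₁ a₂ b₂ : ℤ) (A : Set ((ℕ → ℤ) × (ℕ → ℤ))) : ℝ :=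
  (∑' q : (ℕ → ℤ) × (ℕ → ℤ),
      Set.indicator A
        (fun q => weight p V lam N a₁ b₁ q.1 * weight p V lam N a₂ b₂ q.2) q) /
    (Zpart p V lam N a₁ b₁ * Zpart p V lam N a₂ b₂)

/-- Bridge weight for the unconstrained walk: path from `0` to `d` in `m`
steps, extended by `0` beyond `m`. -/
noncomputable def rwWeight (p : ℤ → ℝ) (m : ℕ) (d : ℤ) (X : ℕ → ℤ) : ℝ :=
  if X 0 = 0 ∧ X m = d ∧ ∀ i, m < i → X i = 0 then
    ∏ i ∈ Finset.range m, p (X (i + 1) - X i)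
  else 0

/-- `P(S_m = d)`. -/
noncomputable def rwZ (p : ℤ → ℝ) (m : ℕ) (d : ℤ) : ℝ :=
  ∑' X : ℕ → ℤ, rwWeight p m d X

/-- The conditional probability `P(A ∣ S_m = d)`, the path `X` playing the
role of `(S_0, S_1, S_2, …)`. -/
noncomputable def rwProb (p : ℤ → ℝ) (m : ℕ) (d : ℤ) (A : Set (ℕ → ℤ)) : ℝ :=
  (∑' X : ℕ → ℤ, Set.indicator A (rwWeight p m d) X) / rwZ p m d

/-- `γ ↦ γ^{1/3} H_γ(λ)` is non-increasing, where `H_γ(λ)` is the unique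
positive solution of `λ H² V(2γH) = 1`. -/
theorem Hgamma_cubeRoot_antitone (V : ℝ → ℝ) (hV : Potential V) :
    ∀ lam : ℝ, 0 < lam → ∀ γ₁ γ₂ H₁ H₂ : ℝ,
      0 < γ₁ → γ₁ < γ₂ → 0 < H₁ → 0 < H₂ →
      lam * H₁ ^ 2 * V (2 * γ₁ * H₁) = 1 →
      lam * H₂ ^ 2 * V (2 * γ₂ * H₂) = 1 →
      γ₂ ^ ((1 : ℝ) / 3) * H₂ ≤ γ₁ ^ ((1 : ℝ) / 3) * H₁ := by
  intro lam hlam γ₁ γ₂ H₁ H₂ hγ₁ h12 hH₁ hH₂ he1 he2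
  have hγ₂ : 0 < γ₂ := hγ₁.trans h12
  -- superhomogeneity of V
  have super : ∀ α x : ℝ, 1 ≤ α → 0 ≤ x → α * V x ≤ V (α * x) := by
    intro α x hα hx
    have hα0 : 0 < α := lt_of_lt_of_le one_pos hα
    have h1 : (1/α) * (α * x) + (1 - 1/α) * 0 = x := by
      field_simp
      ring
    have hmem1 : α * x ∈ Set.Ici (0:ℝ) := mul_nonneg hα0.le hx
    have hmem0 : (0:ℝ) ∈ Set.Ici (0:ℝ) := Set.mem_Ici.mpr le_rfl
    have hw1 : 0 ≤ 1/α := by positivity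
    have hw2 : 0 ≤ 1 - 1/α := by
      have : 1/α ≤ 1 := by
        rw [div_le_one hα0]; exact hα
      linarith
    have hsum : 1/α + (1 - 1/α) = 1 := by ring
    have := hV.convexOn.2 hmem1 hmem0 hw1 hw2 hsum
    simp only [smul_eq_mul] at this
    rw [h1, hV.zero, mul_zero, add_zero] at this
    calc α * V x ≤ α * ((1/α) * V (α * x)) := by
            exact mul_le_mul_of_nonneg_left this hα0.le
      _ = V (α * x) := by field_simp
  set c : ℝ := (γ₁/γ₂) ^ ((1:ℝ)/3) with hc_def
  have hdiv : 0 < γ₁/γ₂ := div_pos hγ₁ hγ₂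
  have hc : 0 < c := Real.rpow_pos_of_pos hdiv _
  have hc3 : c ^ (3:ℕ) = γ₁/γ₂ := by
    rw [hc_def, ← Real.rpow_natCast ((γ₁/γ₂) ^ ((1:ℝ)/3)) 3,
      ← Real.rpow_mul hdiv.le]
    norm_num
  have hcle : c ≤ 1 := by
    apply Real.rpow_le_one hdiv.le _ (by norm_num)
    rw [div_le_one hγ₂]; exact h12.le
  -- key: H₂ ≤ c * H₁
  have key : H₂ ≤ c * H₁ := by
    by_contra hcon
    push_neg at hcon
    set α : ℝ := γ₂ * c / γ₁ with hα_def
    have hαc : α * c ^ 2 = 1 := by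
      have : α * c ^ 2 = γ₂ * c ^ (3:ℕ) / γ₁ := by
        rw [hα_def]; ring
      rw [this, hc3]
      field_simp
    have hα1 : 1 ≤ α := by
      have hc3c : c ^ (3:ℕ) ≤ c := by
        calc c ^ (3:ℕ) = c * c * c := by ring
          _ ≤ 1 * 1 * c := by
              apply mul_le_mul_of_nonneg_right _ hc.le
              exact mul_le_mul hcle hcle hc.le zero_le_one
          _ = c := by ring
      rw [hα_def, le_div_iff₀ hγ₁, one_mul]
      calc γ₁ = γ₂ * (γ₁/γ₂) := by field_simp
        _ = γ₂ * c ^ (3:ℕ) := by rw [hc3]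
        _ ≤ γ₂ * c := mul_le_mul_of_nonneg_left hc3c hγ₂.le
    have hargeq : 2 * γ₂ * (c * H₁) = α * (2 * γ₁ * H₁) := by
      rw [hα_def]; field_simp
    have hVpos1 : 0 ≤ V (2 * γ₁ * H₁) :=
      hV.nonneg _ (by positivity)
    have hlow : 1 ≤ lam * (c * H₁) ^ 2 * V (2 * γ₂ * (c * H₁)) := by
      calc 1 = α * c ^ 2 * (lam * H₁ ^ 2 * V (2 * γ₁ * H₁)) := by
              rw [he1, hαc]; ring
        _ = lam * (c * H₁) ^ 2 * (α * V (2 * γ₁ * H₁)) := by ring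
        _ ≤ lam * (c * H₁) ^ 2 * V (α * (2 * γ₁ * H₁)) := by
              apply mul_le_mul_of_nonneg_left
                (super α _ hα1 (by positivity)) (by positivity)
        _ = lam * (c * H₁) ^ 2 * V (2 * γ₂ * (c * H₁)) := by
              rw [hargeq]
    -- strict monotone of H ↦ lam H² V(2γ₂H)
    have hVpos : 0 < V (2 * γ₂ * (c * H₁)) := by
      have := hV.strictMonoOn (Set.self_mem_Ici)
        (Set.mem_Ici.mpr (by positivity : (0:ℝ) ≤ 2 * γ₂ * (c * H₁)))
        (by positivity)
      rw [hV.zero] at this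
      exact this
    have hVle : V (2 * γ₂ * (c * H₁)) ≤ V (2 * γ₂ * H₂) := by
      apply (hV.strictMonoOn.monotoneOn)
        (Set.mem_Ici.mpr (by positivity))
        (Set.mem_Ici.mpr (by positivity))
      nlinarith
    have hsq : (c * H₁) ^ 2 < H₂ ^ 2 :=
      pow_lt_pow_left₀ hcon (by positivity) two_ne_zero
    have : lam * (c * H₁) ^ 2 * V (2 * γ₂ * (c * H₁)) <
        lam * H₂ ^ 2 * V (2 * γ₂ * H₂) := by
      have h1 : lam * (c * H₁) ^ 2 < lam * H₂ ^ 2 :=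
        mul_lt_mul_of_pos_left hsq hlam
      exact mul_lt_mul h1 hVle hVpos (by positivity)
    rw [he2] at this
    linarith
  -- conclude
  have hγeq : c * γ₂ ^ ((1:ℝ)/3) = γ₁ ^ ((1:ℝ)/3) := by
    rw [hc_def, Real.div_rpow hγ₁.le hγ₂.le, div_mul_cancel₀]
    exact ne_of_gt (Real.rpow_pos_of_pos hγ₂ _)
  calc γ₂ ^ ((1:ℝ)/3) * H₂ ≤ γ₂ ^ ((1:ℝ)/3) * (c * H₁) := by
        apply mul_le_mul_of_nonneg_left key (Real.rpow_pos_of_pos hγ₂ _).le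
    _ = γ₁ ^ ((1:ℝ)/3) * H₁ := by rw [← hγeq]; ring

end CriticalPrewetting
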